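/- Let F : ℝ³ → (0,∞) be continuously differentiable and suppose: (i) Φ(ξ) ∇(ln F)(ξ) = 0 for every ξ ≠ 0, and (ii) Φ(ξ−ξ') (∇(ln F)(ξ) − ∇(ln F)(ξ')) = 0 for all ξ, ξ' ∈ ℝ³ with ξ ≠ ξ'. Then there exist β, ψ ∈ ℝ such that F(ξ) = exp(−β|ξ|²/2 + ψ) for all ξ ∈ ℝ³; i.e., F is a centered Maxwellian. -/

import Mathlib

open MeasureTheory Real

noncomputable section

abbrev E3 := EuclideanSpace ℝ (Fin 3)

/-- Landau collision kernel entries. -/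
def Phi (z : E3) (i j : Fin 3) : ℝ :=
  (if i = j then (1 : ℝ) else 0) / ‖z‖ - z i * z j / ‖z‖ ^ 3

/-- Japanese bracket of a vector. -/
def jap (v : E3) : ℝ := Real.sqrt (1 + ‖v‖ ^ 2)

/-- Japanese bracket of a real number. -/
def japR (r : ℝ) : ℝ := Real.sqrt (1 + r ^ 2)

/-- Maxwellian with inverse temperature `q`. -/
def maxw (q : ℝ) (ξ : E3) : ℝ :=
  (q / (2 * π)) ^ ((3 : ℝ) / 2) * Real.exp (-q * ‖ξ‖ ^ 2 / 2)

def sqMaxw (q : ℝ) (ξ : E3) : ℝ := Real.sqrt (maxw q ξ)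

/-- Entrywise convolution `(Φ_{ij} ∗ G)(v)`. -/
def convPhi (G : E3 → ℝ) (i j : Fin 3) (v : E3) : ℝ := ∫ w : E3, Phi (v - w) i j * G w

/-- `σ_{ij} = Φ_{ij} ∗ μ` with `μ = μ₁` the standard Maxwellian. -/
def sigmaM (i j : Fin 3) (v : E3) : ℝ := convPhi (maxw 1) i j v

/-- Orthogonal projection onto `span {v}`. -/
def projPar (v u : E3) : E3 := ((inner ℝ u v : ℝ) / ‖v‖ ^ 2) • v

/-- Orthogonal projection onto `{v}ᗮ`. -/
def projPerp (v u : E3) : E3 := u - projPar v u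

/-- Cone of points making angle less than `θ` with the line spanned by `ν`. -/
def Acone (ν : E3) (θ : ℝ) : Set E3 := {w : E3 | ‖projPerp ν w‖ < Real.sin θ * ‖w‖}

def e3 (i : Fin 3) : E3 := EuclideanSpace.single i 1

/-- Partial derivative in direction `i`. -/
def pd (i : Fin 3) (f : E3 → ℝ) (v : E3) : ℝ := fderiv ℝ f v (e3 i)

/-- The Landau collision operator in divergence form. -/
def Qop (G₁ G₂ : E3 → ℝ) (v : E3) : ℝ :=
  ∑ i, pd i (fun w => ∑ j, ∫ w' : E3,
    Phi (w - w') i j * (G₁ w' * pd j G₂ w - G₂ w * pd j G₁ w')) v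

/-- Rescaled electron–ion collision operator `Q^ε_{−+}`. -/
def Qmp (ε : ℝ) (G₁ G₂ : E3 → ℝ) (v : E3) : ℝ :=
  ∑ i, pd i (fun w => ∑ j, ∫ ξ' : E3,
    Phi (ε • w - ξ') i j * (ε * G₁ ξ' * pd j G₂ w - G₂ w * pd j G₁ ξ')) v

/-- Rescaled ion–electron collision operator `Q^ε_{+−}`. -/
def Qpm (ε : ℝ) (G₁ G₂ : E3 → ℝ) (ξ : E3) : ℝ :=
  ∑ i, pd i (fun w => ∑ j, ∫ v' : E3,
    Phi (w - ε • v') i j * (G₁ v' * pd j G₂ w - ε * G₂ w * pd j G₁ v')) ξ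

def lap (f : E3 → ℝ) (x : E3) : ℝ := ∑ i, pd i (pd i f) x

/-- Fundamental domain for the torus `𝕋³ = (ℝ/ℤ)³`. -/
def cube : Set E3 := {x : E3 | ∀ i, x i ∈ Set.Ico (0 : ℝ) 1}

def L2norm (ψ : E3 → ℝ) : ℝ := Real.sqrt (∫ v : E3, ψ v ^ 2)

def L2ip (f g : E3 → ℝ) : ℝ := ∫ v : E3, f v * g v

/-- Square of the `H_σ` norm. -/
def HsigSq (ψ : E3 → ℝ) : ℝ :=
  (∫ v : E3, ∑ i, ∑ j, sigmaM i j v * pd i ψ v * pd j ψ v) +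
    ∫ v : E3, (∑ i, sigmaM i i v) * ψ v ^ 2

def HsigNorm (ψ : E3 → ℝ) : ℝ := Real.sqrt (HsigSq ψ)

/-- Square of the `H⁻_{σ;ε}` seminorm. -/
def HminSq (ε : ℝ) (ψ : E3 → ℝ) : ℝ :=
  ε⁻¹ * ∫ ξ : E3, ∑ i, ∑ j, sigmaM i j (ε⁻¹ • ξ) * pd i ψ ξ * pd j ψ ξ

def HminNorm (ε : ℝ) (ψ : E3 → ℝ) : ℝ := Real.sqrt (HminSq ε ψ)

/-- Orthogonal `L²` projection onto
`span {μ_γ^{1/2}, ξ₁μ_γ^{1/2}, ξ₂μ_γ^{1/2}, ξ₃μ_γ^{1/2}, |ξ|²μ_γ^{1/2}}`, computed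
via the orthonormal basis `μ_γ^{1/2}, √γ ξ_i μ_γ^{1/2}, (γ|ξ|²−3)/√6 μ_γ^{1/2}`. -/
def Pgam (γ : ℝ) (h : E3 → ℝ) (ξ : E3) : ℝ :=
  (∫ ζ : E3, h ζ * sqMaxw γ ζ) * sqMaxw γ ξ +
  (∑ i, (∫ ζ : E3, h ζ * (Real.sqrt γ * ζ i * sqMaxw γ ζ)) * (Real.sqrt γ * ξ i * sqMaxw γ ξ)) +
  (∫ ζ : E3, h ζ * ((γ * ‖ζ‖ ^ 2 - 3) / Real.sqrt 6 * sqMaxw γ ζ)) *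
    ((γ * ‖ξ‖ ^ 2 - 3) / Real.sqrt 6 * sqMaxw γ ξ)

def PgamPerp (γ : ℝ) (h : E3 → ℝ) (ξ : E3) : ℝ := h ξ - Pgam γ h ξ

/-- Linearized Landau operator `ℒ_γ` (nonnegative sign convention). -/
def Lgam (γ : ℝ) (h : E3 → ℝ) (ξ : E3) : ℝ :=
  -(sqMaxw γ ξ)⁻¹ *
    (Qop (fun w => sqMaxw γ w * h w) (maxw γ) ξ + Qop (maxw γ) (fun w => sqMaxw γ w * h w) ξ)

/-- Two-temperature linearized operator `ℒ̃_{γ,q}`. -/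
def Ltil (γ q : ℝ) (h : E3 → ℝ) (ξ : E3) : ℝ :=
  -(sqMaxw q ξ)⁻¹ *
    (Qop (fun w => sqMaxw q w * h w) (maxw γ) ξ + Qop (maxw γ) (fun w => sqMaxw q w * h w) ξ)

/-- Nonlinear collision form `Γ_q`. -/
def Gamq (q : ℝ) (h₁ h₂ : E3 → ℝ) (ξ : E3) : ℝ :=
  -(sqMaxw q ξ)⁻¹ * Qop (fun w => sqMaxw q w * h₁ w) (fun w => sqMaxw q w * h₂ w) ξ

/-- Linearized ion–electron operator `ℳ_{q,G}` (nonnegative sign convention). -/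
def Mqg (ε q : ℝ) (G h : E3 → ℝ) (ξ : E3) : ℝ :=
  -(sqMaxw q ξ)⁻¹ * Qpm ε G (fun w => sqMaxw q w * h w) ξ


lemma phi_null (z u : E3) (hz : z ≠ 0) (h : ∀ i, ∑ j, Phi z i j * u j = 0) :
    ∃ c : ℝ, u = c • z := by
  have hnz : ‖z‖ ≠ 0 := norm_ne_zero_iff.mpr hz
  refine ⟨(∑ j, z j * u j) / ‖z‖ ^ 2, ?_⟩
  ext i
  have hi := h i
  have expand : ∑ j, Phi z i j * u j
      = u i / ‖z‖ - z i * (∑ j, z j * u j) / ‖z‖ ^ 3 := by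
    simp only [Phi, sub_mul, Finset.sum_sub_distrib]
    congr 1
    · rw [Finset.sum_eq_single i]
      · simp [inv_mul_eq_div]
      · intro j _ hj; simp [Ne.symm hj]
      · simp [inv_mul_eq_div]
    · rw [Finset.mul_sum, Finset.sum_div]
      apply Finset.sum_congr rfl
      intro j _; ring
  rw [expand] at hi
  set S := ∑ j, z j * u j with hS
  have : u i * ‖z‖ ^ 2 = z i * S := by
    field_simp at hi
    have key : ‖z‖ * (u i * ‖z‖ ^ 2 - z i * S) = 0 := by linear_combination ‖z‖ * hi
    have := mul_eq_zero.mp key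
    rcases this with h' | h'
    · exact absurd h' hnz
    · linarith
  simp only [PiLp.smul_apply, smul_eq_mul]
  field_simp
  linarith [this]

def e3' (i : Fin 3) : E3 := EuclideanSpace.single i 1

lemma e3'_apply (i j : Fin 3) : e3' i j = if j = i then (1:ℝ) else 0 := by
  simp [e3', EuclideanSpace.single_apply]

lemma e3'_ne_zero (i : Fin 3) : e3' i ≠ 0 := by
  intro h
  have := congrArg (fun v : E3 => v i) h
  simp [e3'] at this

/-- Vanishing entropy dissipation forces a centered Maxwellian. -/
theorem stmt_11 (F : E3 → ℝ) (hpos : ∀ ξ, 0 < F ξ) (hC1 : ContDiff ℝ 1 F)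
    (h1 : ∀ ξ : E3, ξ ≠ 0 → ∀ i,
      (∑ j, Phi ξ i j * gradient (fun x => Real.log (F x)) ξ j) = 0)
    (h2 : ∀ ξ ξ' : E3, ξ ≠ ξ' → ∀ i,
      (∑ j, Phi (ξ - ξ') i j *
        (gradient (fun x => Real.log (F x)) ξ j
          - gradient (fun x => Real.log (F x)) ξ' j)) = 0) :
    ∃ β ψ : ℝ, ∀ ξ : E3, F ξ = Real.exp (-β * ‖ξ‖ ^ 2 / 2 + ψ) := by
  set L : E3 → ℝ := fun x => Real.log (F x) with hL
  set g : E3 → E3 := fun ξ => gradient L ξ with hg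
  -- condition (i): gradient is parallel to ξ
  have key1 : ∀ ξ : E3, ξ ≠ 0 → ∃ c : ℝ, g ξ = c • ξ := by
    intro ξ hξ
    exact phi_null ξ (g ξ) hξ (h1 ξ hξ)
  -- condition (ii)
  have key2 : ∀ ξ ξ' : E3, ξ ≠ ξ' → ∃ c : ℝ, g ξ - g ξ' = c • (ξ - ξ') := by
    intro ξ ξ' hne
    refine phi_null (ξ - ξ') (g ξ - g ξ') (sub_ne_zero.mpr hne) ?_
    intro i
    have := h2 ξ ξ' hne i
    simpa [PiLp.sub_apply] using this
  -- the proportionality constant is the same everywhere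
  have claim : ∀ (ξ ξ' : E3) (c c' : ℝ), ξ ≠ 0 → (∀ t : ℝ, ξ' ≠ t • ξ) →
      g ξ = c • ξ → g ξ' = c' • ξ' → c = c' := by
    intro ξ ξ' c c' hξ hnp hc hc'
    have hne : ξ ≠ ξ' := by
      intro h; exact hnp 1 (by rw [← h, one_smul])
    obtain ⟨d, hd⟩ := key2 ξ ξ' hne
    rw [hc, hc', smul_sub] at hd
    have heq : (c - d) • ξ = (c' - d) • ξ' := by
      have : c • ξ - c' • ξ' - (d • ξ - d • ξ') = 0 := by rw [hd]; abel
      have h2' : (c - d) • ξ - (c' - d) • ξ' = 0 := by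
        rw [sub_smul, sub_smul]; rw [← this]; abel
      exact sub_eq_zero.mp h2'
    have hc'd : c' = d := by
      by_contra hne'
      have hξ' : ξ' = ((c' - d)⁻¹ * (c - d)) • ξ := by
        rw [mul_smul, heq, smul_smul, inv_mul_cancel₀ (sub_ne_zero.mpr hne'), one_smul]
      exact hnp _ hξ'
    have : (c - d) • ξ = 0 := by rw [heq, hc'd, sub_self, zero_smul]
    rcases smul_eq_zero.mp this with h' | h'
    · have hcd : c = d := by linarith [sub_eq_zero.mp h']
      rw [hcd, hc'd]
    · exact absurd h' hξ
  obtain ⟨c1, hc1⟩ := key1 (e3' 0) (e3'_ne_zero 0)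
  obtain ⟨c2, hc2⟩ := key1 (e3' 1) (e3'_ne_zero 1)
  have hnp21 : ∀ t : ℝ, e3' 1 ≠ t • e3' 0 := by
    intro t h
    have := congrArg (fun v : E3 => v 1) h
    simp [e3'_apply, PiLp.smul_apply] at this
  have hc12 : c1 = c2 := claim (e3' 0) (e3' 1) c1 c2 (e3'_ne_zero 0) hnp21 hc1 hc2
  have hall : ∀ ξ : E3, g ξ = c1 • ξ := by
    intro ξ
    by_cases hξ : ξ = 0
    · subst hξ
      obtain ⟨d1, hd1⟩ := key2 (e3' 0) 0 (e3'_ne_zero 0)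
      obtain ⟨d2, hd2⟩ := key2 (e3' 1) 0 (e3'_ne_zero 1)
      rw [sub_zero] at hd1 hd2
      have e1r : g 0 = (c1 - d1) • e3' 0 := by
        have : g 0 = g (e3' 0) - d1 • e3' 0 := by
          rw [← hd1]; abel
        rw [this, hc1, sub_smul]
      have e2r : g 0 = (c2 - d2) • e3' 1 := by
        have : g 0 = g (e3' 1) - d2 • e3' 1 := by
          rw [← hd2]; abel
        rw [this, hc2, sub_smul]
      have hz : g 0 = 0 := by
        ext j
        have hA := congrArg (fun v : E3 => v j) e1r
        have hB := congrArg (fun v : E3 => v j) e2r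
        fin_cases j
        · simpa [e3'_apply, PiLp.smul_apply] using hB
        · simpa [e3'_apply, PiLp.smul_apply] using hA
        · simpa [e3'_apply, PiLp.smul_apply] using hA
      rw [hz, smul_zero]
    · obtain ⟨c, hc⟩ := key1 ξ hξ
      suffices hcc : c1 = c by rw [hc, hcc]
      by_cases hpar : ∀ t : ℝ, ξ ≠ t • e3' 0
      · exact claim (e3' 0) ξ c1 c (e3'_ne_zero 0) hpar hc1 hc
      · push_neg at hpar
        obtain ⟨t, ht⟩ := hpar
        have ht0 : t ≠ 0 := by
          intro h; rw [h, zero_smul] at ht; exact hξ ht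
        have hnp2 : ∀ s : ℝ, ξ ≠ s • e3' 1 := by
          intro s h
          rw [ht] at h
          have := congrArg (fun v : E3 => v 0) h
          simp [e3'_apply, PiLp.smul_apply] at this
          exact ht0 this
        have := claim (e3' 1) ξ c2 c (e3'_ne_zero 1) hnp2 hc2 hc
        rw [hc12, this]
  -- analytic part
  have hFdiff : Differentiable ℝ F := hC1.differentiable one_ne_zero
  have hLdiff : Differentiable ℝ L := fun x => (hFdiff x).log (hpos x).ne'
  have hfd : ∀ (ξ u : E3), fderiv ℝ L ξ u = c1 * (inner ℝ ξ u : ℝ) := by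
    intro ξ u
    have hdual : (inner ℝ (g ξ) u : ℝ) = fderiv ℝ L ξ u := by
      simp only [hg, gradient, InnerProductSpace.toDual_symm_apply]
    rw [← hdual, hall ξ, real_inner_smul_left]
  set G : E3 → ℝ := fun ξ => L ξ - c1 / 2 * ‖ξ‖ ^ 2 with hG
  have hGdiff : ∀ ξ : E3, HasFDerivAt G (0 : E3 →L[ℝ] ℝ) ξ := by
    intro ξ
    have hd1 : HasFDerivAt L (fderiv ℝ L ξ) ξ := (hLdiff ξ).hasFDerivAt
    have hd2 : HasFDerivAt (fun x : E3 => c1 / 2 * ‖x‖ ^ 2)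
        ((c1 / 2) • (2 • (innerSL ℝ ξ))) ξ :=
      ((hasStrictFDerivAt_norm_sq ξ).hasFDerivAt).const_smul (c1 / 2)
    have := hd1.sub hd2
    refine this.congr_fderiv ?_
    ext u
    simp only [ContinuousLinearMap.zero_apply, ContinuousLinearMap.sub_apply,
      ContinuousLinearMap.smul_apply, innerSL_apply_apply, smul_eq_mul, hfd]
    ring
  have hconst : ∀ ξ : E3, G ξ = G 0 := fun ξ =>
    is_const_of_fderiv_eq_zero (fun x => (hGdiff x).differentiableAt)
      (fun x => (hGdiff x).fderiv) ξ 0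
  refine ⟨-c1, L 0, ?_⟩
  intro ξ
  have hGξ := hconst ξ
  simp only [hG, norm_zero] at hGξ
  have hLξ : L ξ = c1 / 2 * ‖ξ‖ ^ 2 + L 0 := by
    have : (0:ℝ) ^ 2 = 0 := by norm_num
    rw [this] at hGξ
    linarith [hGξ]
  have : F ξ = Real.exp (L ξ) := (Real.exp_log (hpos ξ)).symm
  rw [this, hLξ]
  congr 1
  ring

end
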